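/- Define f₁(s) = 2 - 2e^s and f₂(s) = s - e^{-2s} for s ≤ 0, extended smoothly so that f₁(s) < 0 for s > 0, f₂(s) ≤ min{0, s} for all s, and f₁(s) = -θ s^{θ-1}, f₂(s) = 0 for s > 1 (θ > 2). Then for any bounded nonnegative function V, a C^2 function u on a closed surface solves Δu + 2 - 2e^u - V e^{-2u} = 0 if and only if it solves -Δu + V u - f₁(u) - V f₂(u) = 0. -/
import Mathlib


/-- With `f₁(s) = 2 - 2e^s` and `f₂(s) = s - e^{-2s}` for `s ≤ 0`,
extended so that `f₁(s) < 0` for `s > 0` and `f₂(s) ≤ min{0,s}` for all `s`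
(e.g. `f₁(s) = -θs^{θ-1}`, `f₂(s) = 0` for `s > 1`, `θ > 2`), a C² function `u` on
a closed surface solves `Δu + 2 - 2e^u - Ve^{-2u} = 0` iff it solves
`-Δu + Vu - f₁(u) - Vf₂(u) = 0`, for any bounded nonnegative `V`.
The closed surface is a compact nonempty topological space and the maximum
principle for `Δ` is assumed. -/
theorem stmt10
    (S : Type*) [TopologicalSpace S] [CompactSpace S] [Nonempty S]
    (u Δu V : S → ℝ)
    (hu : Continuous u)
    (hV : ∀ x, 0 ≤ V x) (M : ℝ) (hVb : ∀ x, V x ≤ M)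
    (hmax : ∀ x, (∀ y, u y ≤ u x) → Δu x ≤ 0)
    (f₁ f₂ : ℝ → ℝ)
    (hf₁neg : ∀ s : ℝ, s ≤ 0 → f₁ s = 2 - 2 * Real.exp s)
    (hf₁pos : ∀ s : ℝ, 0 < s → f₁ s < 0)
    (hf₂neg : ∀ s : ℝ, s ≤ 0 → f₂ s = s - Real.exp (-2 * s))
    (hf₂ : ∀ s : ℝ, f₂ s ≤ min 0 s) :
    (∀ x, Δu x + 2 - 2 * Real.exp (u x) - V x * Real.exp (-2 * u x) = 0)
      ↔ (∀ x, -Δu x + V x * u x - f₁ (u x) - V x * f₂ (u x) = 0) := by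
  obtain ⟨x₀, -, hx₀⟩ := isCompact_univ.exists_isMaxOn Set.univ_nonempty hu.continuousOn
  have hx₀' : ∀ y, u y ≤ u x₀ := fun y => hx₀ (Set.mem_univ y)
  have hΔ : Δu x₀ ≤ 0 := hmax x₀ hx₀'
  constructor
  · intro h x
    -- show u ≤ 0 everywhere
    have hle : ∀ x, u x ≤ 0 := by
      intro y
      refine le_trans (hx₀' y) ?_
      by_contra hpos
      push_neg at hpos
      have h1 := h x₀
      have hexp : (1:ℝ) < Real.exp (u x₀) := by
        rw [Real.one_lt_exp_iff]; exact hpos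
      have hVpos : 0 ≤ V x₀ * Real.exp (-2 * u x₀) :=
        mul_nonneg (hV x₀) (Real.exp_pos _).le
      nlinarith
    rw [hf₁neg _ (hle x), hf₂neg _ (hle x)]
    have := h x
    ring_nf
    ring_nf at this
    linarith
  · intro h x
    have hle : ∀ x, u x ≤ 0 := by
      intro y
      refine le_trans (hx₀' y) ?_
      by_contra hpos
      push_neg at hpos
      have h1 := h x₀
      have hf1 := hf₁pos _ hpos
      have hf2 := hf₂ (u x₀)
      have : V x₀ * f₂ (u x₀) ≤ V x₀ * u x₀ :=
        mul_le_mul_of_nonneg_left (le_trans hf2 (min_le_right _ _)) (hV x₀)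
      linarith
    have := h x
    rw [hf₁neg _ (hle x), hf₂neg _ (hle x)] at this
    linarith
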